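/- arXiv:1502.06896 — 3 statements merged into one kernel-verified Lean document; each statement's English description precedes it below -/
import Mathlib

section
/- Given two paths P and P' in a graph, both from vertex u to vertex v, the path P may be transformed into P' by a finite sequence of reroutings, where a rerouting replaces a subpath of the current path between two vertices x and y by a path Q internally disjoint from the current path with endpoints x and y. -/
/-- `P'` is obtained from `P` by a single rerouting: a subpath of `P` between two
vertices `x` and `y` is replaced by a walk internally disjoint from `P`. -/
def Reroute {V : Type*} {G : SimpleGraph V} {u v : V} (P P' : G.Walk u v) : Prop :=
  ∃ (x y : V) (p₁ : G.Walk u x) (q r : G.Walk x y) (p₂ : G.Walk y v),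
    P = p₁.append (q.append p₂) ∧ P' = p₁.append (r.append p₂) ∧
    ∀ w ∈ r.support, w ∈ P.support → w = x ∨ w = y

open SimpleGraph Walk

/-- Along a walk `Q` to `v`, with `v ∈ S`, there is a first vertex belonging to `S`. -/
private lemma firstHit {V : Type*} {G : SimpleGraph V} (S : Set V) :
    ∀ {w v : V} (Q : G.Walk w v), v ∈ S → ∃ (y : V) (r : G.Walk w y) (d : G.Walk y v),
      Q = r.append d ∧ y ∈ S ∧ ∀ z ∈ r.support, z ∈ S → z = y := by
  intro w v Q
  induction Q with
  | nil =>
    intro hv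
    exact ⟨_, Walk.nil, Walk.nil, rfl, hv, fun z hz _ => by simpa using hz⟩
  | @cons a b c hab Q ih =>
    intro hv
    by_cases ha : a ∈ S
    · exact ⟨a, Walk.nil, Walk.cons hab Q, rfl, ha, fun z hz _ => by simpa using hz⟩
    · obtain ⟨y, r, d, hQ, hyS, hfirst⟩ := ih hv
      refine ⟨y, Walk.cons hab r, d, by rw [Walk.cons_append, hQ], hyS, ?_⟩
      intro z hz hzS
      rcases List.mem_cons.mp (by simpa using hz) with h1 | h1
      · exact absurd (h1 ▸ hzS) ha
      · exact hfirst z h1 hzS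

private lemma mainRel {V : Type*} {G : SimpleGraph V} {v : V} :
    ∀ (n : ℕ) {u : V} (P P' : G.Walk u v), P.IsPath → P'.IsPath → P'.length ≤ n →
    Relation.ReflTransGen
      (fun a b : G.Walk u v => a.IsPath ∧ b.IsPath ∧ Reroute a b ∧
        (∀ z ∈ a.support, z ∈ P.support ∨ z ∈ P'.support) ∧
        (∀ z ∈ b.support, z ∈ P.support ∨ z ∈ P'.support)) P P' := by
  intro n
  induction n with
  | zero =>
    intro u P P' hP hP' hlen
    cases P' with
    | nil =>
      rw [Walk.isPath_iff_eq_nil.mp hP]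
    | cons h q => simp at hlen
  | succ m ih =>
    intro u P P' hP hP' hlen
    by_cases huv : u = v
    · subst huv
      rw [Walk.isPath_iff_eq_nil.mp hP, Walk.isPath_iff_eq_nil.mp hP']
    classical
    have hvS : v ∈ ({z | z ∈ P.support ∧ z ≠ u} : Set V) :=
      ⟨P.end_mem_support, fun h => huv h.symm⟩
    obtain ⟨y, r, d', hP'eq, ⟨hyP, hyu⟩, hfirst⟩ := firstHit _ P' hvS
    cases r with
    | nil => exact absurd rfl hyu
    | @cons _ b _ hab r₀ =>
      -- pieces of P
      set q := P.takeUntil y hyP with hq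
      set d := P.dropUntil y hyP with hd
      have hsplit : q.append d = P := P.take_spec hyP
      have hq_path : q.IsPath := hP.takeUntil hyP
      have hd_path : d.IsPath := hP.dropUntil hyP
      -- r := cons hab r₀ is a path (prefix of P')
      have hP'2 : ((Walk.cons hab r₀).append d').IsPath := by rw [← hP'eq]; exact hP'
      have hr_path : (Walk.cons hab r₀).IsPath := hP'2.of_append_left
      -- internal disjointness of r from P
      have disj : ∀ z ∈ (Walk.cons hab r₀).support, z ∈ P.support → z = u ∨ z = y := by
        intro z hz hzP
        by_cases hzu : z = u
        · exact Or.inl hzu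
        · exact Or.inr (hfirst z hz ⟨hzP, hzu⟩)
      -- the tail of d's support is nodup and avoids y
      have hd_cons : d.support = y :: d.support.tail := d.support_eq_cons
      have hd_nodup := hd_path.support_nodup
      rw [hd_cons, List.nodup_cons] at hd_nodup
      obtain ⟨hy_tail, htail_nodup⟩ := hd_nodup
      -- nodup decomposition of P's support
      have hP_nodup := hP.support_nodup
      rw [← hsplit, Walk.support_append, List.nodup_append] at hP_nodup
      -- P₂ := r.append d is a path
      have hP₂ : ((Walk.cons hab r₀).append d).IsPath := by
        rw [Walk.isPath_def, Walk.support_append, List.nodup_append]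
        refine ⟨hr_path.support_nodup, htail_nodup, ?_⟩
        intro z hz w hzt hzw
        subst hzw
        have hzd : z ∈ d.support := List.mem_of_mem_tail hzt
        have hzP : z ∈ P.support := P.support_dropUntil_subset hyP hzd
        rcases disj z hz hzP with h1 | h1
        · exact hP_nodup.2.2 u q.start_mem_support u (h1 ▸ hzt) rfl
        · exact hy_tail (h1 ▸ hzt)
      -- the single rerouting step P → P₂
      have hre : Reroute P ((Walk.cons hab r₀).append d) := by
        refine ⟨u, y, Walk.nil, q, Walk.cons hab r₀, d, ?_, ?_, disj⟩
        · rw [Walk.nil_append]; exact hsplit.symm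
        · rw [Walk.nil_append]
      -- support bounds
      have hrsub : ∀ z ∈ (Walk.cons hab r₀).support, z ∈ P'.support := by
        intro z hz
        rw [hP'eq, Walk.mem_support_append_iff]
        exact Or.inl hz
      have hP₂sub : ∀ z ∈ ((Walk.cons hab r₀).append d).support,
          z ∈ P.support ∨ z ∈ P'.support := by
        intro z hz
        rcases (Walk.mem_support_append_iff _ _).mp hz with h1 | h1
        · exact Or.inr (hrsub z h1)
        · exact Or.inl (P.support_dropUntil_subset hyP h1)
      have step1 : P.IsPath ∧ ((Walk.cons hab r₀).append d).IsPath ∧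
          Reroute P ((Walk.cons hab r₀).append d) ∧
          (∀ z ∈ P.support, z ∈ P.support ∨ z ∈ P'.support) ∧
          (∀ z ∈ ((Walk.cons hab r₀).append d).support,
            z ∈ P.support ∨ z ∈ P'.support) :=
        ⟨hP, hP₂, hre, fun z hz => Or.inl hz, hP₂sub⟩
      -- now set up the recursion after stripping the first edge
      have hP₂cons : (Walk.cons hab r₀).append d = Walk.cons hab (r₀.append d) := by
        rw [Walk.cons_append]
      have hP'cons : P' = Walk.cons hab (r₀.append d') := by
        rw [hP'eq, Walk.cons_append]
      have hA := (Walk.cons_isPath_iff hab (r₀.append d)).mp (hP₂cons ▸ hP₂)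
      have hB := (Walk.cons_isPath_iff hab (r₀.append d')).mp (hP'cons ▸ hP')
      have hlenB : (r₀.append d').length ≤ m := by
        have : P'.length = (r₀.append d').length + 1 := by
          rw [hP'cons, Walk.length_cons]
        omega
      have chain := ih (r₀.append d) (r₀.append d') hA.1 hB.1 hlenB
      -- lift the chain through `cons hab`
      have hAsub : ∀ z ∈ (r₀.append d).support, z ∈ P.support ∨ z ∈ P'.support := by
        intro z hz
        exact hP₂sub z (by rw [hP₂cons, Walk.support_cons]; exact List.mem_cons_of_mem _ hz)
      have hBsub : ∀ z ∈ (r₀.append d').support, z ∈ P.support ∨ z ∈ P'.support := by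
        intro z hz
        refine Or.inr ?_
        rw [hP'cons, Walk.support_cons]
        exact List.mem_cons_of_mem _ hz
      have huS : u ∉ ((r₀.append d).support) ∧ u ∉ ((r₀.append d').support) := ⟨hA.2, hB.2⟩
      have key : ∀ a' b' : G.Walk b v,
          (a'.IsPath ∧ b'.IsPath ∧ Reroute a' b' ∧
            (∀ z ∈ a'.support, z ∈ (r₀.append d).support ∨ z ∈ (r₀.append d').support) ∧
            (∀ z ∈ b'.support, z ∈ (r₀.append d).support ∨ z ∈ (r₀.append d').support)) →
          ((Walk.cons hab a').IsPath ∧ (Walk.cons hab b').IsPath ∧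
            Reroute (Walk.cons hab a') (Walk.cons hab b') ∧
            (∀ z ∈ (Walk.cons hab a').support, z ∈ P.support ∨ z ∈ P'.support) ∧
            (∀ z ∈ (Walk.cons hab b').support, z ∈ P.support ∨ z ∈ P'.support)) := by
        rintro a' b' ⟨ha'p, hb'p, hre', ha'sub, hb'sub⟩
        have hua' : u ∉ a'.support := by
          intro hu
          rcases ha'sub u hu with h1 | h1
          · exact huS.1 h1
          · exact huS.2 h1
        have hub' : u ∉ b'.support := by
          intro hu
          rcases hb'sub u hu with h1 | h1
          · exact huS.1 h1
          · exact huS.2 h1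
        refine ⟨(Walk.cons_isPath_iff hab a').mpr ⟨ha'p, hua'⟩,
          (Walk.cons_isPath_iff hab b').mpr ⟨hb'p, hub'⟩, ?_, ?_, ?_⟩
        · obtain ⟨x, y', p₁, q₁, r₁, p₂, ha, hb, hdisj⟩ := hre'
          refine ⟨x, y', Walk.cons hab p₁, q₁, r₁, p₂, ?_, ?_, ?_⟩
          · rw [Walk.cons_append, ← ha]
          · rw [Walk.cons_append, ← hb]
          · intro z hz hzmem
            rw [Walk.support_cons, List.mem_cons] at hzmem
            rcases hzmem with h1 | h1
            · exfalso
              apply hub'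
              rw [← h1]
              rw [hb, Walk.mem_support_append_iff, Walk.mem_support_append_iff]
              exact Or.inr (Or.inl hz)
            · exact hdisj z hz h1
        · intro z hz
          rw [Walk.support_cons, List.mem_cons] at hz
          rcases hz with h1 | h1
          · exact Or.inl (h1 ▸ P.start_mem_support)
          · rcases ha'sub z h1 with h2 | h2
            · exact hAsub z h2
            · exact hBsub z h2
        · intro z hz
          rw [Walk.support_cons, List.mem_cons] at hz
          rcases hz with h1 | h1
          · exact Or.inl (h1 ▸ P.start_mem_support)
          · rcases hb'sub z h1 with h2 | h2
            · exact hAsub z h2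
            · exact hBsub z h2
      have lifted : Relation.ReflTransGen
          (fun a b : G.Walk u v => a.IsPath ∧ b.IsPath ∧ Reroute a b ∧
            (∀ z ∈ a.support, z ∈ P.support ∨ z ∈ P'.support) ∧
            (∀ z ∈ b.support, z ∈ P.support ∨ z ∈ P'.support))
          (Walk.cons hab (r₀.append d)) (Walk.cons hab (r₀.append d')) :=
        Relation.ReflTransGen.lift (fun t : G.Walk b v => Walk.cons hab t) key _ _ chain
      rw [← hP₂cons] at lifted
      rw [← hP'cons] at lifted
      exact Relation.ReflTransGen.head step1 lifted

theorem stmt_2 {V : Type*} (G : SimpleGraph V) {u v : V} (P P' : G.Walk u v)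
    (hP : P.IsPath) (hP' : P'.IsPath) :
    Relation.ReflTransGen
      (fun a b : G.Walk u v => a.IsPath ∧ b.IsPath ∧ Reroute a b) P P' :=
  Relation.ReflTransGen.mono (fun a b h => ⟨h.1, h.2.1, h.2.2.1⟩) _ _
    (mainRel P'.length P P' hP hP' le_rfl)
end

section
/- In a biased graph, if C' is a cycle obtained from a cycle C by rerouting along a balanced cycle, then C and C' have the same bias (both balanced or both unbalanced). -/
open Set

/-! ### Matroid core -/

namespace Matroid

variable {α : Type*}

/-- A circuit: a minimal dependent set. -/
def Circuit' (M : Matroid α) (C : Set α) : Prop :=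
  M.Dep C ∧ ∀ D, D ⊂ C → M.Indep D

/-- A matroid is connected if its ground set is nonempty and every two distinct
elements lie in a common circuit. -/
def Connected' (M : Matroid α) : Prop :=
  M.E.Nonempty ∧ ∀ e ∈ M.E, ∀ f ∈ M.E, e ≠ f → ∃ C, M.Circuit' C ∧ e ∈ C ∧ f ∈ C

/-- Deletion of a set of elements. -/
def del (M : Matroid α) (D : Set α) : Matroid α := M ↾ (M.E \ D)

/-- Contraction of a set of elements. -/
def con (M : Matroid α) (C : Set α) : Matroid α := (M✶.del C)✶

/-- `N` is a minor of `M`. -/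
def IsMinor' (N M : Matroid α) : Prop :=
  ∃ C D : Set α, Disjoint C D ∧ C ⊆ M.E ∧ D ⊆ M.E ∧ N = (M.con C).del D

def IsStrictMinor' (N M : Matroid α) : Prop := N.IsMinor' M ∧ N ≠ M

/-- The rank (as an extended natural number) of a set in a matroid. -/
noncomputable def eRk' (M : Matroid α) (X : Set α) : ℕ∞ :=
  ⨆ I : {I : Set α // M.Indep I ∧ I ⊆ X}, I.1.encard

/-- A cocircuit is a circuit of the dual matroid. -/
def Cocircuit' (M : Matroid α) (K : Set α) : Prop := M✶.Circuit' K

/-- A loop is a one-element circuit. -/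
def IsLoopElem (M : Matroid α) (e : α) : Prop := M.Circuit' {e}

end Matroid

/-! ### Biased graph core -/

universe u v

/-- A multigraph, given by assigning two (possibly equal) endpoints to each edge. -/
structure MultiGraph (V : Type u) (E : Type v) where
  fst : E → V
  snd : E → V

namespace MultiGraph

variable {V : Type u} {E : Type v} (G : MultiGraph V E)

/-- Vertex `v` is incident with edge `e`. -/
def Inc (v : V) (e : E) : Prop := G.fst e = v ∨ G.snd e = v

/-- `e` is a loop. -/
def IsLoopEdge (e : E) : Prop := G.fst e = G.snd e

/-- `e` is a link (an edge with two distinct endpoints). -/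
def IsLink (e : E) : Prop := G.fst e ≠ G.snd e

/-- The set of vertices incident with an edge in `X`. -/
def VSet (X : Set E) : Set V := {v | ∃ e ∈ X, G.Inc v e}

/-- The degree of `v` in the edge set `X` (loops count twice). -/
noncomputable def deg (X : Set E) (v : V) : ℕ :=
  {e | e ∈ X ∧ G.fst e = v}.ncard + {e | e ∈ X ∧ G.snd e = v}.ncard

/-- Two edges of `X` are adjacent if they share a vertex. -/
def EdgeAdj (X : Set E) (e f : E) : Prop := e ∈ X ∧ f ∈ X ∧ ∃ v, G.Inc v e ∧ G.Inc v f

/-- The subgraph induced by the edge set `X` is connected. -/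
def ConnectedOn (X : Set E) : Prop :=
  ∀ ⦃e f⦄, e ∈ X → f ∈ X → Relation.ReflTransGen (G.EdgeAdj X) e f

/-- An edge set is a cycle if it is finite, nonempty, connected and every
incident vertex has degree exactly two. -/
def IsCycle (C : Set E) : Prop :=
  C.Finite ∧ C.Nonempty ∧ G.ConnectedOn C ∧ ∀ v ∈ G.VSet C, G.deg C v = 2

/-- The ends of an edge set: its vertices of degree one. -/
def Ends (P : Set E) : Set V := {v | v ∈ G.VSet P ∧ G.deg P v = 1}

/-- An edge set is a path if it is finite, nonempty, connected, has maximum degree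
two and exactly two vertices of degree one. -/
def IsPath (P : Set E) : Prop :=
  P.Finite ∧ P.Nonempty ∧ G.ConnectedOn P ∧ (∀ v ∈ G.VSet P, G.deg P v ≤ 2) ∧
    (G.Ends P).ncard = 2

/-- `C` is (the edge set of) a connected component of the subgraph induced by `X`. -/
def IsComponentOf (C X : Set E) : Prop :=
  ∃ e ∈ X, C = {f | f ∈ X ∧ Relation.ReflTransGen (G.EdgeAdj X) e f}

end MultiGraph

/-- A biased graph: a multigraph with a distinguished collection of "balanced" edge sets. -/
structure BiasedGraph (V : Type u) (E : Type v) extends MultiGraph V E where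
  Balanced : Set (Set E)

namespace BiasedGraph

variable {V : Type u} {E : Type v} (Ω : BiasedGraph V E)

/-- The theta property: every balanced set is a cycle, and no theta subgraph
(a union of two cycles whose symmetric difference is a cycle) contains
exactly two balanced cycles. -/
def ThetaProperty : Prop :=
  (∀ C ∈ Ω.Balanced, Ω.toMultiGraph.IsCycle C) ∧
  ∀ C₁ C₂ C₃ : Set E, Ω.toMultiGraph.IsCycle C₁ → Ω.toMultiGraph.IsCycle C₂ →
    Ω.toMultiGraph.IsCycle C₃ → C₃ = symmDiff C₁ C₂ →
    C₁ ∈ Ω.Balanced → C₂ ∈ Ω.Balanced → C₃ ∈ Ω.Balanced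

def IsBalancedCycle (C : Set E) : Prop := Ω.toMultiGraph.IsCycle C ∧ C ∈ Ω.Balanced

def IsUnbalancedCycle (C : Set E) : Prop := Ω.toMultiGraph.IsCycle C ∧ C ∉ Ω.Balanced

/-- The subgraph induced by `X` is balanced: every cycle inside it is balanced. -/
def BalancedOn (X : Set E) : Prop :=
  ∀ C ⊆ X, Ω.toMultiGraph.IsCycle C → C ∈ Ω.Balanced

/-- A contrabalanced theta subgraph: all three of its cycles are unbalanced. -/
def IsContraTheta (T : Set E) : Prop :=
  ∃ C₁ C₂ C₃ : Set E, Ω.IsUnbalancedCycle C₁ ∧ Ω.IsUnbalancedCycle C₂ ∧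
    Ω.IsUnbalancedCycle C₃ ∧ C₃ = symmDiff C₁ C₂ ∧ T = C₁ ∪ C₂

/-- Tight handcuffs: two edge-disjoint unbalanced cycles meeting in exactly one vertex. -/
def IsTightHandcuff (H : Set E) : Prop :=
  ∃ C₁ C₂ : Set E, Ω.IsUnbalancedCycle C₁ ∧ Ω.IsUnbalancedCycle C₂ ∧ Disjoint C₁ C₂ ∧
    (∃ v, Ω.toMultiGraph.VSet C₁ ∩ Ω.toMultiGraph.VSet C₂ = {v}) ∧ H = C₁ ∪ C₂

/-- Loose handcuffs: two vertex-disjoint unbalanced cycles joined by a path meeting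
them only in its two ends. -/
def IsLooseHandcuff (H : Set E) : Prop :=
  ∃ C₁ C₂ P : Set E, Ω.IsUnbalancedCycle C₁ ∧ Ω.IsUnbalancedCycle C₂ ∧
    Disjoint (Ω.toMultiGraph.VSet C₁) (Ω.toMultiGraph.VSet C₂) ∧
    Ω.toMultiGraph.IsPath P ∧ Disjoint P (C₁ ∪ C₂) ∧
    (∃ a b, a ≠ b ∧ Ω.toMultiGraph.Ends P = {a, b} ∧
      Ω.toMultiGraph.VSet P ∩ Ω.toMultiGraph.VSet C₁ = {a} ∧
      Ω.toMultiGraph.VSet P ∩ Ω.toMultiGraph.VSet C₂ = {b}) ∧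
    H = C₁ ∪ C₂ ∪ P

/-- The circuits of the frame matroid of a biased graph. -/
def FrameCircuit (X : Set E) : Prop :=
  Ω.IsBalancedCycle X ∨ Ω.IsContraTheta X ∨ Ω.IsTightHandcuff X ∨ Ω.IsLooseHandcuff X

end BiasedGraph

/-- A biased graph (on the ground set of `M`) represents the matroid `M`:
it satisfies the theta property and the circuits of `M` are exactly its frame circuits. -/
def BiasedGraph.Represents {V : Type u} {α : Type v} (M : Matroid α)
    (Ω : BiasedGraph V ↥M.E) : Prop :=
  Ω.ThetaProperty ∧ ∀ X : Set ↥M.E, M.Circuit' (Subtype.val '' X) ↔ Ω.FrameCircuit X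

/-- A matroid is frame if some biased graph represents it. -/
def Matroid.IsFrame {α : Type v} (M : Matroid α) : Prop :=
  ∃ (V : Type v) (Ω : BiasedGraph V ↥M.E), BiasedGraph.Represents M Ω

/-- A matroidal `(M, L)` is frame if some biased graph representing `M` has all
elements of `L` as unbalanced loops. -/
def Matroid.IsFrameMatroidal {α : Type v} (M : Matroid α) (L : Set α) : Prop :=
  ∃ (V : Type v) (Ω : BiasedGraph V ↥M.E), BiasedGraph.Represents M Ω ∧
    ∀ e : ↥M.E, e.1 ∈ L → Ω.toMultiGraph.IsLoopEdge e ∧ {e} ∉ Ω.Balanced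

theorem stmt_3 {V E : Type*} (Ω : BiasedGraph V E) (hθ : Ω.ThetaProperty)
    (C C' P Q : Set E) (hC : Ω.toMultiGraph.IsCycle C) (hC' : Ω.toMultiGraph.IsCycle C')
    (hP : Ω.toMultiGraph.IsPath P) (hQ : Ω.toMultiGraph.IsPath Q)
    (hPC : P ⊆ C) (hQC : Disjoint Q C)
    (hint : Ω.toMultiGraph.VSet Q ∩ Ω.toMultiGraph.VSet C = Ω.toMultiGraph.Ends Q)
    (hends : Ω.toMultiGraph.Ends P = Ω.toMultiGraph.Ends Q)
    (hPQ : Ω.IsBalancedCycle (P ∪ Q))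
    (hC'def : C' = (C \ P) ∪ Q) :
    (C ∈ Ω.Balanced ↔ C' ∈ Ω.Balanced) := by
  have hqc := Set.disjoint_left.mp hQC
  have hsd : C' = symmDiff C (P ∪ Q) := by
    ext x
    simp only [hC'def, Set.symmDiff_def, Set.mem_union, Set.mem_diff, Set.sup_eq_union]
    have h1 : x ∈ P → x ∈ C := fun h => hPC h
    have h2 : x ∈ Q → x ∉ C := fun h => hqc h
    tauto
  have hsd2 : C = symmDiff C' (P ∪ Q) := by
    rw [hsd, symmDiff_symmDiff_cancel_right]
  exact ⟨fun h => hθ.2 C (P ∪ Q) C' hC hPQ.1 hC' hsd h hPQ.2,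
         fun h => hθ.2 C' (P ∪ Q) C hC' hPQ.1 hC hsd2 h hPQ.2⟩
end

section
/- A biased graph (G, B) admits a signature Σ ⊆ E(G) with B = B_Σ (where a cycle is in B_Σ iff it contains an even number of edges of Σ) if and only if (G, B) contains no contrabalanced theta subgraph, i.e., no theta subgraph all three of whose cycles are unbalanced. -/
open Set

/-! ### Biased graph core -/

universe u v

set_option linter.unusedSectionVars false
set_option linter.unusedVariables false

namespace MultiGraph

variable {V : Type u} {E : Type v} [Finite V] [Finite E] {G : MultiGraph V E}

/-- fiber of a map inside a set -/
def fib (p : E → V) (X : Set E) (w : V) : Set E := {e | e ∈ X ∧ p e = w}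

lemma deg_eq_fib (X : Set E) (w : V) :
    G.deg X w = (fib G.fst X w).ncard + (fib G.snd X w).ncard := rfl

lemma fib_union (p : E → V) (X Y : Set E) (w : V) :
    fib p (X ∪ Y) w = fib p X w ∪ fib p Y w := by
  ext e; simp only [fib, Set.mem_setOf_eq, Set.mem_union]; tauto

lemma fib_mono (p : E → V) {X Y : Set E} (h : X ⊆ Y) (w : V) :
    fib p X w ⊆ fib p Y w := fun e he => ⟨h he.1, he.2⟩

lemma fib_disjoint (p : E → V) {X Y : Set E} (h : Disjoint X Y) (w : V) :
    Disjoint (fib p X w) (fib p Y w) :=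
  Set.disjoint_left.2 fun e he hf => (Set.disjoint_left.1 h) he.1 hf.1

lemma deg_union {X Y : Set E} (h : Disjoint X Y) (w : V) :
    G.deg (X ∪ Y) w = G.deg X w + G.deg Y w := by
  simp only [deg_eq_fib, fib_union,
    Set.ncard_union_eq (fib_disjoint _ h w) (Set.toFinite _) (Set.toFinite _)]
  ring

lemma deg_mono {X Y : Set E} (h : X ⊆ Y) (w : V) : G.deg X w ≤ G.deg Y w := by
  simp only [deg_eq_fib]
  exact Nat.add_le_add (Set.ncard_le_ncard (fib_mono _ h w) (Set.toFinite _))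
    (Set.ncard_le_ncard (fib_mono _ h w) (Set.toFinite _))

lemma deg_diff_add {X Y : Set E} (h : X ⊆ Y) (w : V) :
    G.deg (Y \ X) w + G.deg X w = G.deg Y w := by
  rw [← deg_union disjoint_sdiff_left w, Set.diff_union_of_subset h]

lemma deg_eq_zero_of_not_mem_VSet {X : Set E} {w : V} (h : w ∉ G.VSet X) :
    G.deg X w = 0 := by
  have h1 : fib G.fst X w = ∅ := by
    ext e; simp only [fib, mem_setOf_eq, mem_empty_iff_false, iff_false, not_and]
    intro he hf; exact h ⟨e, he, Or.inl hf⟩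
  have h2 : fib G.snd X w = ∅ := by
    ext e; simp only [fib, mem_setOf_eq, mem_empty_iff_false, iff_false, not_and]
    intro he hf; exact h ⟨e, he, Or.inr hf⟩
  simp [deg_eq_fib, h1, h2]

lemma one_le_deg {X : Set E} {w : V} (h : w ∈ G.VSet X) : 1 ≤ G.deg X w := by
  obtain ⟨e, he, hf | hf⟩ := h
  · have : e ∈ fib G.fst X w := ⟨he, hf⟩
    have := (Set.ncard_pos (Set.toFinite _)).2 ⟨e, this⟩
    simp only [deg_eq_fib]; omega
  · have : e ∈ fib G.snd X w := ⟨he, hf⟩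
    have := (Set.ncard_pos (Set.toFinite _)).2 ⟨e, this⟩
    simp only [deg_eq_fib]; omega

/-- All degrees even. -/
def EvenDeg (G : MultiGraph V E) (X : Set E) : Prop := ∀ w : V, Even (G.deg X w)

lemma IsCycle.evenDeg {C : Set E} (h : G.IsCycle C) : G.EvenDeg C := by
  intro w
  by_cases hw : w ∈ G.VSet C
  · rw [h.2.2.2 w hw]; exact even_two
  · rw [deg_eq_zero_of_not_mem_VSet hw]; exact Even.zero

lemma evenDeg_symmDiff {X Y : Set E} (hX : G.EvenDeg X) (hY : G.EvenDeg Y) :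
    G.EvenDeg (symmDiff X Y) := by
  intro w
  have dj : ∀ P Q : Set E, Disjoint (P \ Q) (P ∩ Q) :=
    fun P Q => Set.disjoint_left.2 fun e he hf => he.2 hf.2
  have e1 : G.deg (X \ Y) w + G.deg (X ∩ Y) w = G.deg X w := by
    rw [← deg_union (dj X Y) w, Set.diff_union_inter]
  have e2 : G.deg (Y \ X) w + G.deg (Y ∩ X) w = G.deg Y w := by
    rw [← deg_union (dj Y X) w, Set.diff_union_inter]
  have e3 : G.deg (symmDiff X Y) w = G.deg (X \ Y) w + G.deg (Y \ X) w := by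
    rw [Set.symmDiff_def, deg_union]
    exact Set.disjoint_left.2 fun e he hf => hf.2 he.1
  have e4 : G.deg (X ∩ Y) w = G.deg (Y ∩ X) w := by rw [Set.inter_comm]
  have pX := hX w; have pY := hY w
  rw [Nat.even_iff] at pX pY ⊢
  omega

lemma evenDeg_diff {X C : Set E} (hC : C ⊆ X) (hX : G.EvenDeg X) (h2 : G.EvenDeg C) :
    G.EvenDeg (X \ C) := by
  have : symmDiff X C = X \ C := by
    rw [symmDiff_def]; simp [Set.diff_eq_empty.2 hC]
  rw [← this]; exact evenDeg_symmDiff hX h2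

end MultiGraph

namespace MultiGraph

variable {V : Type u} {E : Type v} [Finite V] [Finite E] {G : MultiGraph V E}

lemma two_le_deg_of_two_edges {Z : Set E} {v : V} {e f : E} (he : e ∈ Z) (hf : f ∈ Z)
    (hef : e ≠ f) (hve : G.Inc v e) (hvf : G.Inc v f) : 2 ≤ G.deg Z v := by
  have hcard : ∀ (p : E → V) (a b : E), a ∈ fib p Z v → b ∈ fib p Z v → a ≠ b →
      2 ≤ (fib p Z v).ncard := by
    intro p a b ha hb hab
    exact Set.one_lt_ncard_iff (Set.toFinite _) |>.2 ⟨a, b, ha, hb, hab⟩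
  rcases hve with h1 | h1 <;> rcases hvf with h2 | h2
  · have := hcard G.fst e f ⟨he, h1⟩ ⟨hf, h2⟩ hef
    simp only [deg_eq_fib]; omega
  · have m1 : e ∈ fib G.fst Z v := ⟨he, h1⟩
    have m2 : f ∈ fib G.snd Z v := ⟨hf, h2⟩
    have a1 := (Set.ncard_pos (Set.toFinite _)).2 ⟨e, m1⟩
    have a2 := (Set.ncard_pos (Set.toFinite _)).2 ⟨f, m2⟩
    simp only [deg_eq_fib]; omega
  · have m1 : f ∈ fib G.fst Z v := ⟨hf, h2⟩
    have m2 : e ∈ fib G.snd Z v := ⟨he, h1⟩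
    have a1 := (Set.ncard_pos (Set.toFinite _)).2 ⟨f, m1⟩
    have a2 := (Set.ncard_pos (Set.toFinite _)).2 ⟨e, m2⟩
    simp only [deg_eq_fib]; omega
  · have := hcard G.snd e f ⟨he, h1⟩ ⟨hf, h2⟩ hef
    simp only [deg_eq_fib]; omega

/-- If `Y` is a nonempty even-degree subset of a cycle `C`, then `Y = C`. -/
lemma eq_of_subset_cycle_evenDeg {C Y : Set E} (hC : G.IsCycle C) (hYC : Y ⊆ C)
    (hev : G.EvenDeg Y) (hne : Y.Nonempty) : Y = C := by
  obtain ⟨e₀, he₀⟩ := hne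
  have key : ∀ f g : E, f ∈ Y → G.EdgeAdj C f g → g ∈ Y := by
    rintro f g hf ⟨hfC, hgC, v, hvf, hvg⟩
    have hvC : v ∈ G.VSet C := ⟨f, hfC, hvf⟩
    have hdC : G.deg C v = 2 := hC.2.2.2 v hvC
    have h1 : 1 ≤ G.deg Y v := one_le_deg ⟨f, hf, hvf⟩
    have h2 : G.deg Y v ≤ G.deg C v := deg_mono hYC v
    have hdY : G.deg Y v = 2 := by
      obtain ⟨k, hk⟩ := hev v; omega
    have le1 := Set.ncard_le_ncard (fib_mono G.fst hYC v) (Set.toFinite _)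
    have le2 := Set.ncard_le_ncard (fib_mono G.snd hYC v) (Set.toFinite _)
    have hYd := hdY; have hCd := hdC
    rw [deg_eq_fib] at hYd hCd
    have eq1 : fib G.fst Y v = fib G.fst C v :=
      Set.eq_of_subset_of_ncard_le (fib_mono G.fst hYC v) (by omega) (Set.toFinite _)
    have eq2 : fib G.snd Y v = fib G.snd C v :=
      Set.eq_of_subset_of_ncard_le (fib_mono G.snd hYC v) (by omega) (Set.toFinite _)
    rcases hvg with h | h
    · have : g ∈ fib G.fst C v := ⟨hgC, h⟩
      rw [← eq1] at this; exact this.1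
    · have : g ∈ fib G.snd C v := ⟨hgC, h⟩
      rw [← eq2] at this; exact this.1
  refine subset_antisymm hYC (fun g hg => ?_)
  have hreach := hC.2.2.1 (hYC he₀) hg
  induction hreach with
  | refl => exact he₀
  | tail _ hadj ih => exact key _ _ (ih hadj.1) hadj

/-- The connected component of `a` inside edge set `Z`. -/
def comp (G : MultiGraph V E) (Z : Set E) (a : E) : Set E :=
  {f | f ∈ Z ∧ Relation.ReflTransGen (G.EdgeAdj Z) a f}

lemma comp_subset (Z : Set E) (a : E) : G.comp Z a ⊆ Z := fun _ h => h.1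

lemma mem_comp_self {Z : Set E} {a : E} (ha : a ∈ Z) : a ∈ G.comp Z a :=
  ⟨ha, Relation.ReflTransGen.refl⟩

lemma comp_closed {Z : Set E} {a f g : E} (hf : f ∈ G.comp Z a) (h : G.EdgeAdj Z f g) :
    g ∈ G.comp Z a := ⟨h.2.1, hf.2.tail h⟩

lemma deg_comp {Z : Set E} {a : E} {v : V} (hv : v ∈ G.VSet (G.comp Z a)) :
    G.deg (G.comp Z a) v = G.deg Z v := by
  obtain ⟨g, hg, hvg⟩ := hv
  have hfib1 : fib G.fst (G.comp Z a) v = fib G.fst Z v := by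
    refine subset_antisymm (fib_mono G.fst (comp_subset Z a) v) (fun e he => ?_)
    have hadj : G.EdgeAdj Z g e := ⟨hg.1, he.1, v, hvg, Or.inl he.2⟩
    exact ⟨comp_closed hg hadj, he.2⟩
  have hfib2 : fib G.snd (G.comp Z a) v = fib G.snd Z v := by
    refine subset_antisymm (fib_mono G.snd (comp_subset Z a) v) (fun e he => ?_)
    have hadj : G.EdgeAdj Z g e := ⟨hg.1, he.1, v, hvg, Or.inr he.2⟩
    exact ⟨comp_closed hg hadj, he.2⟩
  rw [deg_eq_fib, deg_eq_fib, hfib1, hfib2]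

end MultiGraph

namespace MultiGraph

variable {V : Type u} {E : Type v} [Finite V] [Finite E] {G : MultiGraph V E}

lemma sum_fib_ncard (p : E → V) (Z : Set E) [Fintype V] [Fintype E] :
    ∑ v : V, (fib p Z v).ncard = Z.ncard := by
  classical
  have key : ∀ v : V, (fib p Z v).ncard = (Z.toFinset.filter (fun e => p e = v)).card := by
    intro v
    have : fib p Z v = ↑(Z.toFinset.filter (fun e => p e = v)) := by
      ext x; simp [fib]
    rw [this, Set.ncard_coe_finset]
  simp only [key]
  rw [← Finset.card_eq_sum_card_fiberwise (fun x _ => Finset.mem_univ (p x))]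
  rw [Set.ncard_eq_toFinset_card']

lemma sum_deg_eq (Z : Set E) [Fintype V] [Fintype E] :
    ∑ v : V, G.deg Z v = 2 * Z.ncard := by
  simp only [deg_eq_fib]
  rw [Finset.sum_add_distrib, sum_fib_ncard, sum_fib_ncard]
  ring

lemma vset_ncard_lt {Z : Set E} (h2 : ∀ v ∈ G.VSet Z, 2 ≤ G.deg Z v)
    (h3 : ∃ v ∈ G.VSet Z, 3 ≤ G.deg Z v) : (G.VSet Z).ncard < Z.ncard := by
  classical
  have : Fintype V := Fintype.ofFinite V
  have : Fintype E := Fintype.ofFinite E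
  obtain ⟨v₀, hv₀, hd₀⟩ := h3
  set W : Finset V := (G.VSet Z).toFinset with hW
  have hsum : ∑ v : V, G.deg Z v = 2 * Z.ncard := sum_deg_eq Z
  have hle : ∑ v ∈ W, G.deg Z v ≤ ∑ v : V, G.deg Z v :=
    Finset.sum_le_sum_of_subset (Finset.subset_univ W)
  have hlt : ∑ v ∈ W, 2 < ∑ v ∈ W, G.deg Z v := by
    refine Finset.sum_lt_sum (fun i hi => h2 i (by simpa [hW] using hi)) ⟨v₀, ?_, ?_⟩
    · simp [hW, hv₀]
    · omega
  have hWcard : ∑ v ∈ W, 2 = 2 * (G.VSet Z).ncard := by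
    rw [Finset.sum_const, Set.ncard_eq_toFinset_card']; ring
  omega

lemma VSet_singleton (e : E) : G.VSet {e} = {G.fst e, G.snd e} := by
  ext v
  constructor
  · rintro ⟨f, hf, hinc⟩
    rcases hf with rfl
    rcases hinc with h | h
    · exact Or.inl h.symm
    · exact Or.inr h.symm
  · rintro (h | h)
    · exact ⟨e, rfl, Or.inl h.symm⟩
    · exact ⟨e, rfl, Or.inr h.symm⟩

lemma isCycle_loop {e : E} (h : G.IsLoopEdge e) : G.IsCycle {e} := by
  refine ⟨Set.toFinite _, Set.singleton_nonempty e, ?_, ?_⟩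
  · intro a b ha hb
    rcases ha with rfl; rcases hb with rfl
    exact Relation.ReflTransGen.refl
  · intro v hv
    obtain ⟨f, hf, hinc⟩ := hv
    rcases hf with rfl
    have h1 : G.fst f = v := by
      rcases hinc with h' | h'
      · exact h'
      · rw [h]; exact h'
    have h2 : G.snd f = v := by rw [← h]; exact h1
    have e1 : fib G.fst {f} v = {f} := by
      ext x; simp only [fib, Set.mem_setOf_eq, Set.mem_singleton_iff]
      constructor
      · exact fun hx => hx.1
      · rintro rfl; exact ⟨rfl, h1⟩
    have e2 : fib G.snd {f} v = {f} := by
      ext x; simp only [fib, Set.mem_setOf_eq, Set.mem_singleton_iff]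
      constructor
      · exact fun hx => hx.1
      · rintro rfl; exact ⟨rfl, h2⟩
    rw [deg_eq_fib, e1, e2, Set.ncard_singleton]

lemma trim : ∀ (n : ℕ) (Z : Set E), Z.ncard ≤ n → Z.Nonempty →
    (∀ e ∈ Z, ¬ G.IsLoopEdge e) → (G.VSet Z).ncard ≤ Z.ncard →
    ∃ W, W ⊆ Z ∧ W.Nonempty ∧ ∀ v ∈ G.VSet W, 2 ≤ G.deg W v := by
  intro n
  induction n with
  | zero =>
    intro Z hn hne _ _
    have := (Set.ncard_pos (Set.toFinite Z)).2 hne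
    omega
  | succ n ih =>
    intro Z hn hne hnl hcard
    by_cases hall : ∀ v ∈ G.VSet Z, 2 ≤ G.deg Z v
    · exact ⟨Z, subset_rfl, hne, hall⟩
    push_neg at hall
    obtain ⟨v₁, hv₁V, hd₁⟩ := hall
    have hd1 : G.deg Z v₁ = 1 := by
      have := one_le_deg hv₁V; omega
    obtain ⟨e, he, hve⟩ := hv₁V
    set Z' := Z \ {e} with hZ'
    have hno : ∀ f ∈ Z', ¬ G.Inc v₁ f := by
      rintro f ⟨hfZ, hfe⟩ hvf
      have := two_le_deg_of_two_edges he hfZ (fun hh => hfe (hh ▸ rfl)) hve hvf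
      omega
    have hVS : G.VSet Z' ⊆ G.VSet Z \ {v₁} := by
      rintro v ⟨f, hf, hvf⟩
      refine ⟨⟨f, hf.1, hvf⟩, ?_⟩
      rintro rfl
      exact hno f hf hvf
    have hZ'ne : Z'.Nonempty := by
      rw [Set.nonempty_iff_ne_empty]
      intro hemp
      have hZe : Z = {e} :=
        subset_antisymm (Set.diff_eq_empty.1 hemp) (Set.singleton_subset_iff.2 he)
      have hvs : G.VSet Z = {G.fst e, G.snd e} := by rw [hZe]; exact VSet_singleton e
      have hne2 : G.fst e ≠ G.snd e := hnl e he
      have : (G.VSet Z).ncard = 2 := by rw [hvs]; exact Set.ncard_pair hne2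
      have : Z.ncard = 1 := by rw [hZe]; exact Set.ncard_singleton e
      omega
    have hv₁Z : v₁ ∈ G.VSet Z := ⟨e, he, hve⟩
    have hVc : (G.VSet Z').ncard ≤ (G.VSet Z).ncard - 1 := by
      have h1 := Set.ncard_le_ncard hVS (Set.toFinite _)
      have h2 : (G.VSet Z \ {v₁}).ncard = (G.VSet Z).ncard - 1 :=
        Set.ncard_diff_singleton_of_mem hv₁Z
      omega
    have hZc : Z'.ncard = Z.ncard - 1 := Set.ncard_diff_singleton_of_mem he
    have hV1 : 1 ≤ (G.VSet Z).ncard := (Set.ncard_pos (Set.toFinite _)).2 ⟨v₁, hv₁Z⟩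
    have hZ1 : 1 ≤ Z.ncard := (Set.ncard_pos (Set.toFinite _)).2 hne
    obtain ⟨W, hWZ, hWne, hWdeg⟩ := ih Z' (by omega) hZ'ne
      (fun f hf => hnl f hf.1) (by omega)
    exact ⟨W, hWZ.trans Set.diff_subset, hWne, hWdeg⟩

end MultiGraph

namespace MultiGraph

variable {V : Type u} {E : Type v} [Finite V] [Finite E] {G : MultiGraph V E}

lemma VSet_mono {X Y : Set E} (h : X ⊆ Y) : G.VSet X ⊆ G.VSet Y := by
  rintro v ⟨e, he, hv⟩; exact ⟨e, h he, hv⟩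

/-- Every nonempty set of edges with all degrees even contains a cycle. -/
lemma exists_cycle_subset {Y : Set E} (hne : Y.Nonempty) (hev : G.EvenDeg Y) :
    ∃ C, C ⊆ Y ∧ G.IsCycle C := by
  by_cases hloop : ∃ e ∈ Y, G.IsLoopEdge e
  · obtain ⟨e, he, hl⟩ := hloop
    exact ⟨{e}, Set.singleton_subset_iff.2 he, isCycle_loop hl⟩
  push_neg at hloop
  have hdegY : ∀ v ∈ G.VSet Y, 2 ≤ G.deg Y v := by
    intro v hv
    obtain ⟨k, hk⟩ := hev v
    have := one_le_deg hv
    omega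
  set P : Set E → Prop :=
    fun W => W ⊆ Y ∧ W.Nonempty ∧ ∀ v ∈ G.VSet W, 2 ≤ G.deg W v with hP
  set m : Set E → ℕ := fun W => (G.VSet W).ncard + W.ncard with hm
  set M : Set ℕ := {n | ∃ W, P W ∧ m W = n} with hM
  have hMne : M.Nonempty := ⟨m Y, Y, ⟨subset_rfl, hne, hdegY⟩, rfl⟩
  obtain ⟨Z, hPZ, hmZ⟩ := Nat.sInf_mem hMne
  have hmin : ∀ W, P W → sInf M ≤ m W := fun W h => Nat.sInf_le ⟨W, h, rfl⟩
  obtain ⟨hZY, hZne, hZdeg⟩ := hPZ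
  -- connectivity
  have hconn : G.ConnectedOn Z := by
    intro a b ha hb
    have hPW : P (G.comp Z a) := by
      refine ⟨(comp_subset Z a).trans hZY, ⟨a, mem_comp_self ha⟩, ?_⟩
      intro v hv
      rw [deg_comp hv]
      exact hZdeg v (VSet_mono (comp_subset Z a) hv)
    have h1 : (G.VSet (G.comp Z a)).ncard ≤ (G.VSet Z).ncard :=
      Set.ncard_le_ncard (VSet_mono (comp_subset Z a)) (Set.toFinite _)
    have h2 : (G.comp Z a).ncard ≤ Z.ncard :=
      Set.ncard_le_ncard (comp_subset Z a) (Set.toFinite _)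
    have h3 : m Z ≤ m (G.comp Z a) := hmZ ▸ hmin _ hPW
    have h4 : Z.ncard ≤ (G.comp Z a).ncard := by
      simp only [hm] at h3; omega
    have : G.comp Z a = Z :=
      Set.eq_of_subset_of_ncard_le (comp_subset Z a) h4 (Set.toFinite _)
    rw [← this] at hb
    exact hb.2
  -- all degrees are 2
  have hdeg2 : ∀ v ∈ G.VSet Z, G.deg Z v = 2 := by
    intro v hv
    by_contra hne2
    have h3le : 3 ≤ G.deg Z v := by
      have := hZdeg v hv; omega
    have hlt : (G.VSet Z).ncard < Z.ncard := vset_ncard_lt hZdeg ⟨v, hv, h3le⟩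
    obtain ⟨a, haZ, hva⟩ := hv
    set Z' := Z \ {a} with hZ'
    have hZ'ne : Z'.Nonempty := by
      rw [Set.nonempty_iff_ne_empty]
      intro hemp
      have hZa : Z = {a} :=
        subset_antisymm (Set.diff_eq_empty.1 hemp) (Set.singleton_subset_iff.2 haZ)
      have f1 : (fib G.fst Z v).ncard ≤ 1 := by
        have : fib G.fst Z v ⊆ {a} := fun x hx => hZa ▸ hx.1
        calc (fib G.fst Z v).ncard ≤ ({a} : Set E).ncard :=
              Set.ncard_le_ncard this (Set.toFinite _)
          _ = 1 := Set.ncard_singleton a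
      have f2 : (fib G.snd Z v).ncard ≤ 1 := by
        have : fib G.snd Z v ⊆ {a} := fun x hx => hZa ▸ hx.1
        calc (fib G.snd Z v).ncard ≤ ({a} : Set E).ncard :=
              Set.ncard_le_ncard this (Set.toFinite _)
          _ = 1 := Set.ncard_singleton a
      rw [deg_eq_fib] at h3le; omega
    have hZc : Z'.ncard = Z.ncard - 1 := Set.ncard_diff_singleton_of_mem haZ
    have hinv : (G.VSet Z').ncard ≤ Z'.ncard := by
      have hsub : Z' ⊆ Z := Set.diff_subset
      have := Set.ncard_le_ncard (VSet_mono (G := G) hsub) (Set.toFinite _)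
      omega
    obtain ⟨W, hWZ', hWne, hWdeg⟩ := trim Z'.ncard Z' le_rfl hZ'ne
      (fun f hf => hloop f (hZY hf.1)) hinv
    have hPW : P W := ⟨(hWZ'.trans Set.diff_subset).trans hZY, hWne, hWdeg⟩
    have hmlt : m W < m Z := by
      have c1 : (G.VSet W).ncard ≤ (G.VSet Z).ncard :=
        Set.ncard_le_ncard (VSet_mono (hWZ'.trans Set.diff_subset)) (Set.toFinite _)
      have c2 : W.ncard ≤ Z'.ncard := Set.ncard_le_ncard hWZ' (Set.toFinite _)
      have c3 : 1 ≤ Z.ncard := (Set.ncard_pos (Set.toFinite _)).2 hZne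
      simp only [hm]; omega
    have := hmZ ▸ hmin W hPW
    omega
  exact ⟨Z, hZY, Set.toFinite Z, hZne, hconn, hdeg2⟩

/-- A decomposition of an edge set into pairwise disjoint cycles. -/
def IsDecomp (G : MultiGraph V E) (l : List (Set E)) (X : Set E) : Prop :=
  (∀ C ∈ l, G.IsCycle C) ∧ l.Pairwise Disjoint ∧ X = l.foldr (· ∪ ·) ∅

lemma mem_foldr_union {l : List (Set E)} {x : E} :
    x ∈ l.foldr (· ∪ ·) (∅ : Set E) ↔ ∃ D ∈ l, x ∈ D := by
  induction l with
  | nil => simp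
  | cons C l ih => simp [ih]

lemma IsDecomp.subset_of_mem {l : List (Set E)} {X D : Set E}
    (h : G.IsDecomp l X) (hD : D ∈ l) : D ⊆ X := by
  intro x hx
  rw [h.2.2]
  exact mem_foldr_union.2 ⟨D, hD, hx⟩

lemma exists_decomp : ∀ (n : ℕ) (X : Set E), X.ncard ≤ n → G.EvenDeg X →
    ∃ l, G.IsDecomp l X := by
  intro n
  induction n with
  | zero =>
    intro X hn _
    have : X = ∅ := by
      rcases Set.eq_empty_or_nonempty X with h | h
      · exact h
      · have := (Set.ncard_pos (Set.toFinite X)).2 h; omega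
    exact ⟨[], by simp, List.Pairwise.nil, by simp [this]⟩
  | succ n ih =>
    intro X hn hev
    rcases Set.eq_empty_or_nonempty X with h | h
    · exact ⟨[], by simp, List.Pairwise.nil, by simp [h]⟩
    obtain ⟨C, hCX, hC⟩ := exists_cycle_subset h hev
    set X' := X \ C with hX'
    have hev' : G.EvenDeg X' := evenDeg_diff hCX hev hC.evenDeg
    have hc1 : 1 ≤ C.ncard := (Set.ncard_pos (Set.toFinite _)).2 hC.2.1
    have hcle : C.ncard ≤ X.ncard := Set.ncard_le_ncard hCX (Set.toFinite _)
    have hX'c : X'.ncard = X.ncard - C.ncard := Set.ncard_diff hCX (Set.toFinite _)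
    obtain ⟨l', hl'⟩ := ih X' (by omega) hev'
    refine ⟨C :: l', ?_, ?_, ?_⟩
    · intro D hD
      rcases hD with _ | hD
      · exact hC
      · exact hl'.1 _ (by assumption)
    · refine List.Pairwise.cons (fun D hD => ?_) hl'.2.1
      have : D ⊆ X' := hl'.subset_of_mem hD
      exact Set.disjoint_of_subset_right this disjoint_sdiff_right
    · simp only [List.foldr_cons, ← hl'.2.2]
      rw [Set.union_diff_cancel hCX]

end MultiGraph

open scoped Classical

section Parity

variable {E : Type v} [Finite E]

/-- Parity of the intersection with a signature `S`, as an element of `ZMod 2`. -/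
noncomputable def par (S X : Set E) : ZMod 2 := ((X ∩ S).ncard : ZMod 2)

lemma even_iff_cast_eq_zero {n : ℕ} : Even n ↔ ((n : ZMod 2) = 0) := by
  rw [even_iff_two_dvd]
  exact (ZMod.natCast_eq_zero_iff n 2).symm

lemma par_empty (S : Set E) : par S (∅ : Set E) = 0 := by
  simp [par]

lemma par_symmDiff (S X Y : Set E) : par S (symmDiff X Y) = par S X + par S Y := by
  have hds : (symmDiff X Y) ∩ S = symmDiff (X ∩ S) (Y ∩ S) := by
    ext x; simp [Set.mem_symmDiff]; tauto
  set A := X ∩ S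
  set B := Y ∩ S
  have h1 : (symmDiff A B).ncard + 2 * (A ∩ B).ncard = A.ncard + B.ncard := by
    have e1 : (symmDiff A B).ncard = (A \ B).ncard + (B \ A).ncard := by
      rw [Set.symmDiff_def]
      exact Set.ncard_union_eq (Set.disjoint_left.2 fun e he hf => hf.2 he.1)
        (Set.toFinite _) (Set.toFinite _)
    have e2 : (A \ B).ncard + (A ∩ B).ncard = A.ncard := by
      rw [← Set.ncard_union_eq (Set.disjoint_left.2 fun e he hf => he.2 hf.2)
        (Set.toFinite _) (Set.toFinite _), Set.diff_union_inter]
    have e3 : (B \ A).ncard + (B ∩ A).ncard = B.ncard := by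
      rw [← Set.ncard_union_eq (Set.disjoint_left.2 fun e he hf => he.2 hf.2)
        (Set.toFinite _) (Set.toFinite _), Set.diff_union_inter]
    have e4 : (A ∩ B).ncard = (B ∩ A).ncard := by rw [Set.inter_comm]
    omega
  have := congrArg (fun n : ℕ => (n : ZMod 2)) h1
  push_cast at this
  have h2 : (2 : ZMod 2) = 0 := rfl
  rw [h2] at this
  simp only [par, hds]
  rw [← this]; ring

lemma par_union_disjoint (S : Set E) {X Y : Set E} (h : Disjoint X Y) :
    par S (X ∪ Y) = par S X + par S Y := by
  have : X ∪ Y = symmDiff X Y := by rw [h.symmDiff_eq_sup]; rfl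
  rw [this]; exact par_symmDiff S X Y

lemma par_foldr (S : Set E) (l : List (Set E)) (hpw : l.Pairwise Disjoint) :
    par S (l.foldr (· ∪ ·) ∅) = (l.map (par S)).sum := by
  induction l with
  | nil => simpa using par_empty S
  | cons C l ih =>
    rcases hpw with _ | ⟨hC, hpw⟩
    have hdisj : Disjoint C (l.foldr (· ∪ ·) ∅) := by
      rw [Set.disjoint_right]
      intro x hx hxC
      obtain ⟨D, hD, hxD⟩ := MultiGraph.mem_foldr_union.1 hx
      exact Set.disjoint_left.1 (hC D hD) hxC hxD
    simp only [List.foldr_cons, List.map_cons, List.sum_cons]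
    rw [par_union_disjoint S hdisj, ih hpw]

end Parity

namespace BiasedGraph

variable {V : Type u} {E : Type v} [Finite V] [Finite E] (Ω : BiasedGraph V E)

/-- The balance indicator of a cycle. -/
noncomputable def fB (C : Set E) : ZMod 2 := if C ∈ Ω.Balanced then 0 else 1

variable {Ω}

lemma fB_eq_zero_iff {C : Set E} : Ω.fB C = 0 ↔ C ∈ Ω.Balanced := by
  unfold fB; split_ifs with h <;> simp [h]

lemma theta_val (hθ : Ω.ThetaProperty) (hNT : ¬ ∃ T, Ω.IsContraTheta T)
    {C D : Set E} (hC : Ω.toMultiGraph.IsCycle C) (hD : Ω.toMultiGraph.IsCycle D)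
    (hT : Ω.toMultiGraph.IsCycle (symmDiff C D)) :
    Ω.fB (symmDiff C D) = Ω.fB C + Ω.fB D := by
  set T := symmDiff C D with hTdef
  have hDT : D = symmDiff C T := (symmDiff_symmDiff_cancel_left C D).symm
  have hCT : C = symmDiff D T := by
    rw [hTdef, symmDiff_comm C D]
    exact (symmDiff_symmDiff_cancel_left D C).symm
  have i1 : C ∈ Ω.Balanced → D ∈ Ω.Balanced → T ∈ Ω.Balanced :=
    hθ.2 C D T hC hD hT rfl
  have i2 : C ∈ Ω.Balanced → T ∈ Ω.Balanced → D ∈ Ω.Balanced :=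
    fun h1 h2 => hθ.2 C T D hC hT hD hDT h1 h2
  have i3 : D ∈ Ω.Balanced → T ∈ Ω.Balanced → C ∈ Ω.Balanced :=
    fun h1 h2 => hθ.2 D T C hD hT hC hCT h1 h2
  have i4 : C ∉ Ω.Balanced → D ∉ Ω.Balanced → T ∈ Ω.Balanced := by
    intro h1 h2
    by_contra h3
    exact hNT ⟨C ∪ D, C, D, T, ⟨hC, h1⟩, ⟨hD, h2⟩, ⟨hT, h3⟩, rfl, rfl⟩
  unfold fB
  by_cases hc : C ∈ Ω.Balanced <;> by_cases hd : D ∈ Ω.Balanced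
  · simp [hc, hd, i1 hc hd]
  · have ht : T ∉ Ω.Balanced := fun h => hd (i2 hc h)
    simp [hc, hd, ht]
  · have ht : T ∉ Ω.Balanced := fun h => hc (i3 hd h)
    simp [hc, hd, ht]
  · have ht : T ∈ Ω.Balanced := i4 hc hd
    simp [hc, hd, ht]; decide

/-- `S` is a correct signature for all cycles inside `A`. -/
def GoodOn (Ω : BiasedGraph V E) (A S : Set E) : Prop :=
  ∀ C : Set E, Ω.toMultiGraph.IsCycle C → C ⊆ A → Ω.fB C = par S C

end BiasedGraph

namespace BiasedGraph

set_option maxHeartbeats 1000000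

variable {V : Type u} {E : Type v} [Finite V] [Finite E] {Ω : BiasedGraph V E}

lemma zmod2_add_self : ∀ a : ZMod 2, a + a = 0 := by decide

lemma zmod2_key : ∀ a b d t : ZMod 2, b + t + (a + d) = 0 → a + b = d + t := by decide

lemma zmod2_key2 : ∀ x y p q : ZMod 2, x + y = p + q → x = p + (y + q) := by decide

lemma zmod2_one : ∀ a : ZMod 2, a ≠ 0 → a = 1 := by decide

lemma main_induction (hθ : Ω.ThetaProperty) (hNT : ¬ ∃ T, Ω.IsContraTheta T) :
    ∀ (n : ℕ) (A : Set E), A.ncard ≤ n → ∃ S, S ⊆ A ∧ Ω.GoodOn A S := by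
  intro n
  induction n with
  | zero =>
    intro A hA
    refine ⟨∅, Set.empty_subset A, fun C hC hCA => ?_⟩
    exfalso
    have h1 : A.Nonempty := hC.2.1.mono hCA
    have := (Set.ncard_pos (Set.toFinite A)).2 h1
    omega
  | succ n ih =>
    intro A hA
    rcases Set.eq_empty_or_nonempty A with hAe | ⟨e, heA⟩
    · refine ⟨∅, Set.empty_subset A, fun C hC hCA => ?_⟩
      exfalso
      obtain ⟨x, hx⟩ := hC.2.1
      exact absurd (hCA hx) (by simp [hAe])
    have hA1 : 1 ≤ A.ncard := (Set.ncard_pos (Set.toFinite A)).2 ⟨e, heA⟩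
    have hA'n : (A \ {e}).ncard ≤ n := by
      have := Set.ncard_diff_singleton_of_mem heA
      omega
    obtain ⟨S', hS'A, hS'⟩ := ih (A \ {e}) hA'n
    have heS' : e ∉ S' := fun hh => (hS'A hh).2 rfl
    -- Key consistency lemma
    have KCL : ∀ C₁ C₂ : Set E, Ω.toMultiGraph.IsCycle C₁ → Ω.toMultiGraph.IsCycle C₂ →
        C₁ ⊆ A → C₂ ⊆ A → e ∈ C₁ → e ∈ C₂ →
        Ω.fB C₁ + Ω.fB C₂ = par S' (symmDiff C₁ C₂) := by
      intro C₁ C₂ h1 h2 hs1 hs2 he1 he2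
      by_cases heq : C₁ = C₂
      · subst heq
        rw [symmDiff_self]
        have hb : (⊥ : Set E) = (∅ : Set E) := rfl
        rw [hb, par_empty]
        exact zmod2_add_self _
      have heX : e ∉ symmDiff C₁ C₂ := by
        simp [Set.mem_symmDiff, he1, he2]
      have hXA' : symmDiff C₁ C₂ ⊆ A \ {e} := by
        intro x hx
        refine ⟨?_, by rintro rfl; exact heX hx⟩
        rcases Set.mem_symmDiff.1 hx with ⟨h, _⟩ | ⟨h, _⟩
        exacts [hs1 h, hs2 h]
      have hXev : Ω.toMultiGraph.EvenDeg (symmDiff C₁ C₂) :=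
        MultiGraph.evenDeg_symmDiff h1.evenDeg h2.evenDeg
      have hXne : (symmDiff C₁ C₂).Nonempty := by
        rw [Set.nonempty_iff_ne_empty]
        intro h; exact heq (symmDiff_eq_bot.1 h)
      obtain ⟨l, hl⟩ := MultiGraph.exists_decomp (symmDiff C₁ C₂).ncard _ le_rfl hXev
      have hcycD : ∀ D ∈ l, Ω.toMultiGraph.IsCycle D := hl.1
      have hsubD : ∀ D ∈ l, D ⊆ symmDiff C₁ C₂ := fun D hD => hl.subset_of_mem hD
      have hparX : par S' (symmDiff C₁ C₂) = (l.map Ω.fB).sum := by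
        conv_lhs => rw [hl.2.2]
        rw [par_foldr S' l hl.2.1]
        congr 1
        refine List.map_congr_left (fun D hD => ?_)
        exact (hS' D (hcycD D hD) ((hsubD D hD).trans hXA')).symm
      rw [hparX]
      match l, hl, hcycD, hsubD with
      | [], hl, hcycD, hsubD =>
        exfalso
        have : symmDiff C₁ C₂ = ∅ := by simpa using hl.2.2
        exact Set.nonempty_iff_ne_empty.1 hXne this
      | [D₁], hl, hcycD, hsubD =>
        have hXD : symmDiff C₁ C₂ = D₁ := by simpa using hl.2.2
        have hDcyc : Ω.toMultiGraph.IsCycle (symmDiff C₁ C₂) := by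
          rw [hXD]; exact hcycD D₁ (by simp)
        have hth := theta_val hθ hNT h1 h2 hDcyc
        simp only [List.map_cons, List.map_nil, List.sum_cons, List.sum_nil, add_zero]
        rw [← hXD]
        exact hth.symm
      | D₁ :: D₂ :: l₂, hl, hcycD, hsubD =>
        have hmeet1 : ∀ D ∈ D₁ :: D₂ :: l₂, (D ∩ C₁).Nonempty := by
          intro D hD
          rw [Set.nonempty_iff_ne_empty]
          intro hemp
          have hDC₂ : D ⊆ C₂ := by
            intro x hx
            rcases Set.mem_symmDiff.1 (hsubD D hD hx) with ⟨hxc, _⟩ | ⟨hxc, _⟩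
            · exfalso
              have hmem : x ∈ D ∩ C₁ := ⟨hx, hxc⟩
              rw [hemp] at hmem
              exact Set.notMem_empty x hmem
            · exact hxc
          have hDeq : D = C₂ := MultiGraph.eq_of_subset_cycle_evenDeg h2 hDC₂
            (hcycD D hD).evenDeg (hcycD D hD).2.1
          exact heX (hsubD D hD (hDeq ▸ he2))
        have hmeet2 : ∀ D ∈ D₁ :: D₂ :: l₂, (D ∩ C₂).Nonempty := by
          intro D hD
          rw [Set.nonempty_iff_ne_empty]
          intro hemp
          have hDC₁ : D ⊆ C₁ := by
            intro x hx
            rcases Set.mem_symmDiff.1 (hsubD D hD hx) with ⟨hxc, _⟩ | ⟨hxc, _⟩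
            · exact hxc
            · exfalso
              have hmem : x ∈ D ∩ C₂ := ⟨hx, hxc⟩
              rw [hemp] at hmem
              exact Set.notMem_empty x hmem
          have hDeq : D = C₁ := MultiGraph.eq_of_subset_cycle_evenDeg h1 hDC₁
            (hcycD D hD).evenDeg (hcycD D hD).2.1
          exact heX (hsubD D hD (hDeq ▸ he1))
        -- structure of the decomposition
        have hpw := hl.2.1
        have hD₁tail : ∀ D ∈ D₂ :: l₂, Disjoint D₁ D := by
          intro D hD
          exact List.rel_of_pairwise_cons hpw hD
        have htailpw : (D₂ :: l₂).Pairwise Disjoint := hpw.of_cons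
        set U₂ : Set E := (D₂ :: l₂).foldr (· ∪ ·) ∅ with hU₂def
        have hXfold : symmDiff C₁ C₂ = D₁ ∪ U₂ := hl.2.2
        have hU₂disj : Disjoint D₁ U₂ := by
          rw [Set.disjoint_right]
          intro x hx hxD₁
          obtain ⟨D, hD, hxD⟩ := MultiGraph.mem_foldr_union.1 hx
          exact Set.disjoint_left.1 (hD₁tail D hD) hxD₁ hxD
        have heD₁ : e ∉ D₁ := fun hh => heX (hsubD D₁ (by simp) hh)
        have hC₁D₁ : C₁ ≠ D₁ := fun hh => heD₁ (hh ▸ he1)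
        have hD₁A : D₁ ⊆ A := ((hsubD D₁ (by simp)).trans hXA').trans Set.diff_subset
        -- decompose symmDiff C₁ D₁
        have hYdev : Ω.toMultiGraph.EvenDeg (symmDiff C₁ D₁) :=
          MultiGraph.evenDeg_symmDiff h1.evenDeg (hcycD D₁ (by simp)).evenDeg
        obtain ⟨lF, hlF⟩ := MultiGraph.exists_decomp (symmDiff C₁ D₁).ncard _ le_rfl hYdev
        have hYdsub : symmDiff C₁ D₁ ⊆ C₁ ∪ D₁ := by
          intro x hx
          rcases Set.mem_symmDiff.1 hx with ⟨h, _⟩ | ⟨h, _⟩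
          exacts [Or.inl h, Or.inr h]
        -- the edge h outside C₁ ∪ D₁
        obtain ⟨h, hhD₂, hhC₂⟩ := hmeet2 D₂ (by simp)
        have hhX : h ∈ symmDiff C₁ C₂ := hsubD D₂ (by simp) hhD₂
        have hhC₁ : h ∉ C₁ := by
          rcases Set.mem_symmDiff.1 hhX with ⟨_, hnc⟩ | ⟨_, hnc⟩
          · exact absurd hhC₂ hnc
          · exact hnc
        have hhD₁ : h ∉ D₁ := fun hh =>
          Set.disjoint_left.1 (hD₁tail D₂ (by simp)) hh hhD₂
        have hhA : h ∈ A := hs2 hhC₂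
        have hhn : (A \ {h}).ncard ≤ n := by
          have := Set.ncard_diff_singleton_of_mem hhA
          omega
        obtain ⟨Sh, _, hSh⟩ := ih (A \ {h}) hhn
        have hE1 : (lF.map Ω.fB).sum = Ω.fB C₁ + Ω.fB D₁ := by
          have q1 : Ω.fB C₁ = par Sh C₁ :=
            hSh C₁ h1 (fun x hx => ⟨hs1 hx, by rintro rfl; exact hhC₁ hx⟩)
          have q2 : Ω.fB D₁ = par Sh D₁ :=
            hSh D₁ (hcycD D₁ (by simp))
              (fun x hx => ⟨hD₁A hx, by rintro rfl; exact hhD₁ hx⟩)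
          have q3 : (lF.map Ω.fB).sum = (lF.map (par Sh)).sum := by
            congr 1
            refine List.map_congr_left (fun F hF => ?_)
            refine hSh F (hlF.1 F hF) (fun x hx => ?_)
            have hxYd : x ∈ symmDiff C₁ D₁ := hlF.subset_of_mem hF hx
            refine ⟨?_, ?_⟩
            · rcases hYdsub hxYd with hc | hc
              exacts [hs1 hc, hD₁A hc]
            · rintro rfl
              rcases hYdsub hxYd with hc | hc
              exacts [hhC₁ hc, hhD₁ hc]
          rw [q3, ← par_foldr Sh lF hlF.2.1, ← hlF.2.2, par_symmDiff, ← q1, ← q2]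
        -- the edge g in C₁ ∩ D₁
        obtain ⟨g, hgD₁, hgC₁⟩ := hmeet1 D₁ (by simp)
        have hgX : g ∈ symmDiff C₁ C₂ := hsubD D₁ (by simp) hgD₁
        have hgC₂ : g ∉ C₂ := by
          rcases Set.mem_symmDiff.1 hgX with ⟨_, hnc⟩ | ⟨hc, hnc⟩
          · exact hnc
          · exact absurd hgC₁ hnc
        have hgU₂ : g ∉ U₂ := Set.disjoint_left.1 hU₂disj hgD₁
        have hgYd : g ∉ symmDiff C₁ D₁ := by
          simp [Set.mem_symmDiff, hgC₁, hgD₁]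
        have hgA : g ∈ A := hs1 hgC₁
        have hgn : (A \ {g}).ncard ≤ n := by
          have := Set.ncard_diff_singleton_of_mem hgA
          omega
        obtain ⟨Sg, _, hSg⟩ := ih (A \ {g}) hgn
        have hE2 : Ω.fB C₂ + ((D₂ :: l₂).map Ω.fB).sum + (lF.map Ω.fB).sum = 0 := by
          have q1 : Ω.fB C₂ = par Sg C₂ :=
            hSg C₂ h2 (fun x hx => ⟨hs2 hx, by rintro rfl; exact hgC₂ hx⟩)
          have q2 : ((D₂ :: l₂).map Ω.fB).sum = par Sg U₂ := by
            have : ((D₂ :: l₂).map Ω.fB).sum = ((D₂ :: l₂).map (par Sg)).sum := by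
              congr 1
              refine List.map_congr_left (fun D hD => ?_)
              refine hSg D (hcycD D (by simp [hD])) (fun x hx => ?_)
              have hxX : x ∈ symmDiff C₁ C₂ := hsubD D (by simp [hD]) hx
              refine ⟨(hXA' hxX).1, ?_⟩
              rintro rfl
              exact hgU₂ (MultiGraph.mem_foldr_union.2 ⟨D, hD, hx⟩)
            rw [this, ← par_foldr Sg _ htailpw]
          have q3 : (lF.map Ω.fB).sum = par Sg (symmDiff C₁ D₁) := by
            have : (lF.map Ω.fB).sum = (lF.map (par Sg)).sum := by
              congr 1
              refine List.map_congr_left (fun F hF => ?_)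
              refine hSg F (hlF.1 F hF) (fun x hx => ?_)
              have hxYd : x ∈ symmDiff C₁ D₁ := hlF.subset_of_mem hF hx
              refine ⟨?_, by rintro rfl; exact hgYd hxYd⟩
              rcases hYdsub hxYd with hc | hc
              exacts [hs1 hc, hD₁A hc]
            rw [this, ← par_foldr Sg lF hlF.2.1, ← hlF.2.2]
          rw [q1, q2, q3]
          have hU₂eq : U₂ = symmDiff D₁ (symmDiff C₁ C₂) := by
            have hsd : symmDiff D₁ U₂ = symmDiff C₁ C₂ := by
              rw [hU₂disj.symmDiff_eq_sup]
              exact hXfold.symm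
            rw [← hsd]
            exact (symmDiff_symmDiff_cancel_left D₁ U₂).symm
          have hkey : symmDiff (symmDiff C₂ U₂) (symmDiff C₁ D₁) = (∅ : Set E) := by
            rw [hU₂eq]
            ext x
            simp only [Set.mem_symmDiff, Set.mem_empty_iff_false, iff_false]
            tauto
          have hp := congrArg (par Sg) hkey
          rw [par_symmDiff, par_symmDiff, par_empty] at hp
          exact hp
        simp only [List.map_cons, List.sum_cons] at hE2 ⊢
        rw [hE1] at hE2
        exact zmod2_key _ _ _ _ hE2
    -- extend the signature to e
    by_cases hex : ∃ C₀, Ω.toMultiGraph.IsCycle C₀ ∧ C₀ ⊆ A ∧ e ∈ C₀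
    · obtain ⟨C₀, hC₀, hC₀A, heC₀⟩ := hex
      set t : ZMod 2 := Ω.fB C₀ + par S' (C₀ \ {e}) with ht
      refine ⟨if t = 0 then S' else insert e S', ?_, ?_⟩
      · split_ifs
        · exact hS'A.trans Set.diff_subset
        · exact Set.insert_subset heA (hS'A.trans Set.diff_subset)
      intro C hC hCA
      by_cases heC : e ∈ C
      · have hpar : par (if t = 0 then S' else insert e S') C = par S' (C \ {e}) + t := by
          by_cases h0 : t = 0
          · rw [if_pos h0, h0, add_zero]
            have : C ∩ S' = (C \ {e}) ∩ S' := by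
              ext x
              simp only [Set.mem_inter_iff, Set.mem_diff, Set.mem_singleton_iff]
              constructor
              · rintro ⟨hxC, hxS⟩
                exact ⟨⟨hxC, by rintro rfl; exact heS' hxS⟩, hxS⟩
              · rintro ⟨⟨hxC, _⟩, hxS⟩
                exact ⟨hxC, hxS⟩
            unfold par
            rw [this]
          · rw [if_neg h0, zmod2_one t h0]
            have hins : C ∩ insert e S' = insert e ((C \ {e}) ∩ S') := by
              ext x
              simp only [Set.mem_inter_iff, Set.mem_insert_iff, Set.mem_diff,
                Set.mem_singleton_iff]
              constructor
              · rintro ⟨hxC, rfl | hxS⟩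
                · exact Or.inl rfl
                · exact Or.inr ⟨⟨hxC, by rintro rfl; exact heS' hxS⟩, hxS⟩
              · rintro (rfl | ⟨⟨hxC, _⟩, hxS⟩)
                · exact ⟨heC, Or.inl rfl⟩
                · exact ⟨hxC, Or.inr hxS⟩
            have hnotmem : e ∉ (C \ {e}) ∩ S' := fun hh => hh.1.2 rfl
            unfold par
            rw [hins, Set.ncard_insert_of_notMem hnotmem (Set.toFinite _)]
            push_cast
            ring
        rw [hpar, ht]
        have hdd : symmDiff (C \ {e}) (C₀ \ {e}) = symmDiff C C₀ := by
          ext x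
          rcases eq_or_ne x e with rfl | hx
          · simp [Set.mem_symmDiff, heC, heC₀]
          · simp [Set.mem_symmDiff, hx]
        have hKCL := KCL C C₀ hC hC₀ hCA hC₀A heC heC₀
        rw [← hdd, par_symmDiff] at hKCL
        exact zmod2_key2 _ _ _ _ hKCL
      · have hCS : C ∩ (if t = 0 then S' else insert e S') = C ∩ S' := by
          split_ifs
          · rfl
          · ext x
            simp only [Set.mem_inter_iff, Set.mem_insert_iff]
            constructor
            · rintro ⟨hxC, rfl | hxS⟩
              · exact absurd hxC heC
              · exact ⟨hxC, hxS⟩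
            · rintro ⟨hxC, hxS⟩
              exact ⟨hxC, Or.inr hxS⟩
        have : par (if t = 0 then S' else insert e S') C = par S' C := by
          unfold par; rw [hCS]
        rw [this]
        exact hS' C hC (fun x hx => ⟨hCA hx, by rintro rfl; exact heC hx⟩)
    · refine ⟨S', hS'A.trans Set.diff_subset, fun C hC hCA => ?_⟩
      have heC : e ∉ C := fun hh => hex ⟨C, hC, hCA, hh⟩
      exact hS' C hC (fun x hx => ⟨hCA hx, by rintro rfl; exact heC hx⟩)

end BiasedGraph

theorem stmt_4 {V E : Type*} [Finite V] [Finite E] (Ω : BiasedGraph V E)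
    (hθ : Ω.ThetaProperty) :
    (∃ S : Set E, ∀ C : Set E, Ω.toMultiGraph.IsCycle C →
        (C ∈ Ω.Balanced ↔ Even (C ∩ S).ncard)) ↔
      ¬ ∃ T : Set E, Ω.IsContraTheta T := by
  constructor
  · rintro ⟨S, hS⟩ ⟨T, C₁, C₂, C₃, ⟨hc1, hb1⟩, ⟨hc2, hb2⟩, ⟨hc3, hb3⟩, h3eq, -⟩
    have p : ∀ C : Set E, Ω.toMultiGraph.IsCycle C → C ∉ Ω.Balanced → par S C = 1 := by
      intro C hc hb
      have hne : ¬ Even (C ∩ S).ncard := fun h => hb ((hS C hc).2 h)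
      have hcast : ((C ∩ S).ncard : ZMod 2) ≠ 0 := fun h => hne (even_iff_cast_eq_zero.2 h)
      exact BiasedGraph.zmod2_one _ hcast
    have q1 := p C₁ hc1 hb1
    have q2 := p C₂ hc2 hb2
    have q3 := p C₃ hc3 hb3
    have hsum : par S C₃ = par S C₁ + par S C₂ := by rw [h3eq, par_symmDiff]
    rw [q1, q2, q3] at hsum
    exact absurd hsum (by decide)
  · intro hNT
    obtain ⟨S, -, hS⟩ :=
      BiasedGraph.main_induction hθ hNT (Set.univ : Set E).ncard Set.univ le_rfl
    refine ⟨S, fun C hC => ?_⟩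
    have hfb := hS C hC (Set.subset_univ C)
    rw [even_iff_cast_eq_zero]
    have hpardef : par S C = ((C ∩ S).ncard : ZMod 2) := rfl
    constructor
    · intro hb
      rw [← hpardef, ← hfb]
      exact BiasedGraph.fB_eq_zero_iff.2 hb
    · intro h0
      rw [← hpardef, ← hfb] at h0
      exact BiasedGraph.fB_eq_zero_iff.1 h0
end
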